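/- With d = 1 and m = 2, the assignment p₅ⱼ = 1, p₁ⱼ = p₂ⱼ = 0 for j = 1,2, p₃₁ = √3/3, p₃₂ = -√3/3, p₄₁ = p₄₂ = -1/6 is a non-trivial solution of the order-3 polynomial system: Σⱼ p₅ⱼ² p₁ⱼ = 0, Σⱼ p₅ⱼ² p₃ⱼ = 0, Σⱼ p₅ⱼ²(p₂ⱼ + p₁ⱼp₃ⱼ) = 0, Σⱼ p₅ⱼ² p₁ⱼ² = 0, Σⱼ p₅ⱼ²((1/2)p₃ⱼ² + p₄ⱼ) = 0, Σⱼ p₅ⱼ²((1/6)p₃ⱼ³ + p₃ⱼp₄ⱼ) = 0, Σⱼ p₅ⱼ² p₁ⱼ³ = 0, Σⱼ p₅ⱼ²((1/2)p₁ⱼ²p₃ⱼ + p₁ⱼp₂ⱼ) = 0, Σⱼ p₅ⱼ²((1/2)p₁ⱼp₃ⱼ² + p₁ⱼp₄ⱼ + p₂ⱼp₃ⱼ) = 0. -/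

import Mathlib

open Finset

/-- With `d = 1` and `m = 2`, the assignment `p₅ⱼ = 1`, `p₁ⱼ = p₂ⱼ = 0`,
`p₃₁ = √3/3`, `p₃₂ = -√3/3`, `p₄₁ = p₄₂ = -1/6` is a non-trivial solution of
the order-3 polynomial system, showing `r̄(2) > 3`. -/
theorem order_three_system_nontrivial_solution :
    ∃ p₁ p₂ p₃ p₄ p₅ : Fin 2 → ℝ,
      p₁ = ![0, 0] ∧ p₂ = ![0, 0] ∧
      p₃ = ![Real.sqrt 3 / 3, -(Real.sqrt 3 / 3)] ∧
      p₄ = ![-(1 / 6), -(1 / 6)] ∧ p₅ = ![1, 1] ∧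
      (∑ j, p₅ j ^ 2 * p₁ j = 0) ∧
      (∑ j, p₅ j ^ 2 * p₃ j = 0) ∧
      (∑ j, p₅ j ^ 2 * (p₂ j + p₁ j * p₃ j) = 0) ∧
      (∑ j, p₅ j ^ 2 * p₁ j ^ 2 = 0) ∧
      (∑ j, p₅ j ^ 2 * ((1 / 2) * p₃ j ^ 2 + p₄ j) = 0) ∧
      (∑ j, p₅ j ^ 2 * ((1 / 6) * p₃ j ^ 3 + p₃ j * p₄ j) = 0) ∧
      (∑ j, p₅ j ^ 2 * p₁ j ^ 3 = 0) ∧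
      (∑ j, p₅ j ^ 2 * ((1 / 2) * p₁ j ^ 2 * p₃ j + p₁ j * p₂ j) = 0) ∧
      (∑ j, p₅ j ^ 2 * ((1 / 2) * p₁ j * p₃ j ^ 2 + p₁ j * p₄ j + p₂ j * p₃ j) = 0) ∧
      (∀ j, p₅ j ≠ 0) ∧ (∃ j, p₃ j ≠ 0) := by

  refine ⟨_,_,_,_,_, rfl, rfl, rfl, rfl, rfl, ?_, ?_, ?_, ?_, ?_, ?_, ?_, ?_, ?_, ?_, ?_⟩
  all_goals simp [Fin.sum_univ_two, Fin.forall_fin_two]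
  · have h : Real.sqrt 3 ^ 2 = 3 := Real.sq_sqrt (by norm_num)
    nlinarith [h]
  · ring
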